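/- Let G be a finite connected simple graph with a cut-vertex x such that G − x has exactly two connected components C₁ and C₂, let v₁ be a universal vertex of C₁, suppose the number of universal vertices of C₁ is at most the number of universal vertices of C₂, and suppose v₁x is an edge of G that is not a bridge of G. Then G is not 2-γ'MB-critical. -/

import Mathlib

/-- `D` is a dominating set of `G`: every vertex not in `D` has a neighbor in `D`. -/
def Dominating {V : Type*} (G : SimpleGraph V) (D : Set V) : Prop :=
  ∀ v, v ∉ D → ∃ d ∈ D, G.Adj d v

/-- Dominator wins the S-game on `G` within one move. -/
def WinsWithin1 {V : Type*} (G : SimpleGraph V) : Prop :=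
  ∀ s₁ : V, ∃ d₁, d₁ ≠ s₁ ∧ Dominating G {d₁}

/-- Dominator wins the S-game on `G` within two moves. -/
def WinsWithin2 {V : Type*} (G : SimpleGraph V) : Prop :=
  ∀ s₁ : V, ∃ d₁, d₁ ≠ s₁ ∧
    (Dominating G {d₁} ∨
      ∀ s₂, s₂ ∉ ({s₁, d₁} : Set V) →
        ∃ d₂, d₂ ∉ ({s₁, d₁, s₂} : Set V) ∧ Dominating G {d₁, d₂})

/-- `γ'MB(G) = 2`: Dominator wins the S-game within two moves but not within one. -/
def MBPrimeEqTwo {V : Type*} (G : SimpleGraph V) : Prop :=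
  WinsWithin2 G ∧ ¬ WinsWithin1 G

/-- `G` is `2`-`γ'MB`-critical: `γ'MB(G) = 2` and for every edge `e`, Dominator does not
win the S-game on `G - e` within two moves. -/
def Critical2 {V : Type*} (G : SimpleGraph V) : Prop :=
  MBPrimeEqTwo G ∧ ∀ u v : V, G.Adj u v → ¬ WinsWithin2 (G.deleteEdges {s(u, v)})

/-- `v` is a universal vertex of the subgraph of `G` induced on `C`:
`v ∈ C` and `v` is adjacent in `G` to every other vertex of `C`. -/
def UnivIn {V : Type*} (G : SimpleGraph V) (C : Set V) (v : V) : Prop :=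
  v ∈ C ∧ ∀ u ∈ C, u ≠ v → G.Adj v u

/-- `G - x` has exactly two connected components, with vertex sets `C₁` and `C₂`. -/
def IsTwoComponents {V : Type*} (G : SimpleGraph V) (x : V) (C₁ C₂ : Set V) : Prop :=
  C₁.Nonempty ∧ C₂.Nonempty ∧ Disjoint C₁ C₂ ∧ C₁ ∪ C₂ = {x}ᶜ ∧
    (G.induce C₁).Connected ∧ (G.induce C₂).Connected ∧
    ∀ u ∈ C₁, ∀ v ∈ C₂, ¬ G.Adj u v


namespace Stmt11Aux

variable {V : Type*}

/-- Bundle of the structural facts we use about the two components. -/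
structure Struct (G : SimpleGraph V) (x : V) (C₁ C₂ : Set V) : Prop where
  h1ne : C₁.Nonempty
  h2ne : C₂.Nonempty
  disj : Disjoint C₁ C₂
  union : C₁ ∪ C₂ = {x}ᶜ
  cross : ∀ u ∈ C₁, ∀ v ∈ C₂, ¬ G.Adj u v

namespace Struct

variable {G : SimpleGraph V} {x : V} {C₁ C₂ : Set V}

lemma xn1 (S : Struct G x C₁ C₂) : x ∉ C₁ := by
  intro h
  have : x ∈ ({x}ᶜ : Set V) := S.union ▸ Set.mem_union_left _ h
  simp at this

lemma xn2 (S : Struct G x C₁ C₂) : x ∉ C₂ := by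
  intro h
  have : x ∈ ({x}ᶜ : Set V) := S.union ▸ Set.mem_union_right _ h
  simp at this

lemma mem (S : Struct G x C₁ C₂) {v : V} (h : v ≠ x) : v ∈ C₁ ∨ v ∈ C₂ := by
  have : v ∈ ({x}ᶜ : Set V) := by simpa using h
  rw [← S.union] at this
  exact this

lemma ne_x1 (S : Struct G x C₁ C₂) {v : V} (h : v ∈ C₁) : v ≠ x :=
  fun hv => S.xn1 (hv ▸ h)

lemma ne_x2 (S : Struct G x C₁ C₂) {v : V} (h : v ∈ C₂) : v ≠ x :=
  fun hv => S.xn2 (hv ▸ h)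

lemma ne12 (S : Struct G x C₁ C₂) {a b : V} (ha : a ∈ C₁) (hb : b ∈ C₂) : a ≠ b :=
  S.disj.ne_of_mem ha hb

end Struct

lemma pair_eq_of {d d' a w : V} (hne : d ≠ d') (ha : a ∈ ({d, d'} : Set V))
    (hw : w ∈ ({d, d'} : Set V)) (haw : a ≠ w) : ({d, d'} : Set V) = {a, w} := by
  simp only [Set.mem_insert_iff, Set.mem_singleton_iff] at ha hw
  rcases ha with rfl | rfl <;> rcases hw with rfl | rfl
  · exact absurd rfl haw
  · rfl
  · exact Set.pair_comm _ _
  · exact absurd rfl haw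

lemma other_mem {d d' a : V} (hne : d ≠ d') (ha : a ∈ ({d, d'} : Set V)) :
    ∃ w ∈ ({d, d'} : Set V), w ≠ a := by
  simp only [Set.mem_insert_iff, Set.mem_singleton_iff] at ha
  rcases ha with rfl | rfl
  · exact ⟨d', by simp, fun h => hne h.symm⟩
  · exact ⟨d, by simp, hne⟩

section Main

variable {G : SimpleGraph V} {x : V} {C₁ C₂ : Set V}

lemma adjDel (t : V) {u v : V} (h : G.Adj u v) (hu : u ≠ x) (hv : v ≠ x) :
    (G.deleteEdges {s(x, t)}).Adj u v := by
  rw [SimpleGraph.deleteEdges_adj]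
  refine ⟨h, ?_⟩
  simp only [Set.mem_singleton_iff, Sym2.eq_iff]
  rintro (⟨rfl, rfl⟩ | ⟨rfl, rfl⟩)
  · exact hu rfl
  · exact hv rfl

lemma adjDelx (t : V) {v : V} (h : G.Adj x v) (hv : v ≠ t) :
    (G.deleteEdges {s(x, t)}).Adj x v := by
  rw [SimpleGraph.deleteEdges_adj]
  refine ⟨h, ?_⟩
  simp only [Set.mem_singleton_iff, Sym2.eq_iff]
  rintro (⟨-, rfl⟩ | ⟨rfl, rfl⟩)
  · exact hv rfl
  · exact h.ne rfl

/-- A pair consisting of a universal vertex of each component dominates the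
deleted graph provided `x` keeps a neighbour in the pair. -/
lemma domPair (S : Struct G x C₁ C₂) {a b : V} (t : V)
    (ha : UnivIn G C₁ a) (hb : UnivIn G C₂ b)
    (hx : (G.deleteEdges {s(x, t)}).Adj x a ∨ (G.deleteEdges {s(x, t)}).Adj x b) :
    Dominating (G.deleteEdges {s(x, t)}) {a, b} := by
  intro v hv
  simp only [Set.mem_insert_iff, Set.mem_singleton_iff, not_or] at hv
  by_cases hvx : v = x
  · subst hvx
    rcases hx with h | h
    · exact ⟨a, by simp, h.symm⟩
    · exact ⟨b, by simp, h.symm⟩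
  · rcases S.mem hvx with h1 | h2
    · exact ⟨a, by simp, adjDel t (ha.2 v h1 hv.1) (S.ne_x1 ha.1) (S.ne_x1 h1)⟩
    · exact ⟨b, by simp, adjDel t (hb.2 v h2 hv.2) (S.ne_x2 hb.1) (S.ne_x2 h2)⟩

/-- If `x` sees all of `C₁` and `b` is universal in `C₂` then `{x, b}` dominates
the graph with an edge from `x` into `C₂` deleted. -/
lemma domXb (S : Struct G x C₁ C₂) {b t : V} (hF₁ : ∀ u ∈ C₁, G.Adj x u)
    (hb : UnivIn G C₂ b) (ht : t ∈ C₂) :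
    Dominating (G.deleteEdges {s(x, t)}) {x, b} := by
  intro v hv
  simp only [Set.mem_insert_iff, Set.mem_singleton_iff, not_or] at hv
  rcases S.mem hv.1 with h1 | h2
  · exact ⟨x, by simp, adjDelx t (hF₁ v h1) (S.ne12 h1 ht)⟩
  · exact ⟨b, by simp, adjDel t (hb.2 v h2 hv.2) (S.ne_x2 hb.1) (S.ne_x2 h2)⟩

/-- Shape of a dominating pair avoiding `x`: one universal vertex on each side. -/
lemma shape (S : Struct G x C₁ C₂) {d d' : V} (hdom : Dominating G {d, d'})
    (hxd : x ≠ d) (hxd' : x ≠ d') (hd : d ∈ C₁) :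
    UnivIn G C₁ d ∧ d' ∈ C₂ ∧ UnivIn G C₂ d' := by
  have hd' : d' ∈ C₂ := by
    rcases S.mem (Ne.symm hxd') with h1 | h2
    · exfalso
      obtain ⟨c₂, hc₂⟩ := S.h2ne
      have hc₂m : c₂ ∉ ({d, d'} : Set V) := by
        simp only [Set.mem_insert_iff, Set.mem_singleton_iff, not_or]
        exact ⟨(S.ne12 hd hc₂).symm, (S.ne12 h1 hc₂).symm⟩
      obtain ⟨e, he, ha⟩ := hdom c₂ hc₂m
      simp only [Set.mem_insert_iff, Set.mem_singleton_iff] at he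
      rcases he with rfl | rfl
      · exact S.cross e hd c₂ hc₂ ha
      · exact S.cross e h1 c₂ hc₂ ha
    · exact h2
  refine ⟨⟨hd, fun u hu hud => ?_⟩, hd', hd', fun u hu hud => ?_⟩
  · have hum : u ∉ ({d, d'} : Set V) := by
      simp only [Set.mem_insert_iff, Set.mem_singleton_iff, not_or]
      exact ⟨hud, S.ne12 hu hd'⟩
    obtain ⟨e, he, ha⟩ := hdom u hum
    simp only [Set.mem_insert_iff, Set.mem_singleton_iff] at he
    rcases he with rfl | rfl
    · exact ha
    · exact absurd ha.symm (S.cross u hu e hd')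
  · have hum : u ∉ ({d, d'} : Set V) := by
      simp only [Set.mem_insert_iff, Set.mem_singleton_iff, not_or]
      exact ⟨(S.ne12 hd hu).symm, hud⟩
    obtain ⟨e, he, ha⟩ := hdom u hum
    simp only [Set.mem_insert_iff, Set.mem_singleton_iff] at he
    rcases he with rfl | rfl
    · exact absurd ha (S.cross e hd u hu)
    · exact ha

/-- No one-element dominating set avoiding `x`. -/
lemma noSingleton' (S : Struct G x C₁ C₂) {d : V} (hdx : d ≠ x) :
    ¬ Dominating G {d} := by
  intro hdom
  rcases S.mem hdx with h1 | h2
  · obtain ⟨c₂, hc₂⟩ := S.h2ne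
    obtain ⟨e, he, ha⟩ := hdom c₂ (by simp [(S.ne12 h1 hc₂).symm])
    simp only [Set.mem_singleton_iff] at he
    subst he
    exact S.cross e h1 c₂ hc₂ ha
  · obtain ⟨c₁, hc₁⟩ := S.h1ne
    obtain ⟨e, he, ha⟩ := hdom c₁ (by simp [S.ne12 hc₁ h2])
    simp only [Set.mem_singleton_iff] at he
    subst he
    exact absurd ha.symm (S.cross c₁ hc₁ e h2)

/-- No one-element dominating set at all, when `x` misses a vertex of `C₁`. -/
lemma noSingleton (S : Struct G x C₁ C₂) (hnF₁ : ¬ ∀ u ∈ C₁, G.Adj x u) (d : V) :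
    ¬ Dominating G {d} := by
  by_cases hdx : d = x
  · subst hdx
    intro hdom
    apply hnF₁
    intro u hu
    obtain ⟨e, he, ha⟩ := hdom u (by simp [(S.ne_x1 hu : u ≠ d)])
    simp only [Set.mem_singleton_iff] at he
    subst he
    exact ha
  · exact noSingleton' S hdx

/-- Transfer a win in `G` to a win in a subgraph `H`, given that all dominating
pairs transfer and there is no dominating singleton. -/
lemma transferW2 {H : SimpleGraph V}
    (hH : ∀ d d' : V, d ≠ d' → Dominating G {d, d'} → Dominating H {d, d'})
    (hns : ∀ d, ¬ Dominating G {d}) (hW : WinsWithin2 G) : WinsWithin2 H := by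
  intro s₁
  obtain ⟨d₁, hne, hbr⟩ := hW s₁
  refine ⟨d₁, hne, Or.inr ?_⟩
  rcases hbr with h | h
  · exact absurd h (hns d₁)
  · intro s₂ hs₂
    obtain ⟨d₂, hd₂, hdom⟩ := h s₂ hs₂
    have hne' : d₁ ≠ d₂ := by
      intro hc
      exact hd₂ (by simp [hc.symm])
    exact ⟨d₂, hd₂, hH d₁ d₂ hne' hdom⟩


/-- Transfer core for the case `x` sees all of `C₂` but not all of `C₁`:
delete the edge `x v₁`. -/
lemma B2core (S : Struct G x C₁ C₂) {v₁ : V} (hv₁U : UnivIn G C₁ v₁)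
    (hF₂ : ∀ u ∈ C₂, G.Adj x u) (hnF₁ : ¬ ∀ u ∈ C₁, G.Adj x u)
    {d d' : V} (hne : d ≠ d') (hdom : Dominating G {d, d'}) :
    Dominating (G.deleteEdges {s(x, v₁)}) {d, d'} := by
  intro v hv
  obtain ⟨e, he, hae⟩ := hdom v hv
  by_cases hbad : s(e, v) = s(x, v₁)
  · rw [Sym2.eq_iff] at hbad
    rcases hbad with ⟨he1, hv1⟩ | ⟨he1, hv1⟩
    · -- the dominating edge was `x v₁` with `x ∈ D`
      rw [hv1]
      rw [he1] at he
      rw [hv1] at hv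
      obtain ⟨w, hwm, hwx⟩ := other_mem hne he
      have hwv₁ : w ≠ v₁ := fun h => hv (h ▸ hwm)
      rcases S.mem hwx with h1 | h2
      · exact ⟨w, hwm, adjDel v₁ (hv₁U.2 w h1 hwv₁).symm hwx (S.ne_x1 hv₁U.1)⟩
      · exfalso
        apply hnF₁
        intro u hu
        have hD : ({d, d'} : Set V) = {x, w} := pair_eq_of hne he hwm (Ne.symm hwx)
        rw [hD] at hdom
        obtain ⟨e', he', ha'⟩ := hdom u (by
          simp only [Set.mem_insert_iff, Set.mem_singleton_iff, not_or]
          exact ⟨S.ne_x1 hu, S.ne12 hu h2⟩)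
        simp only [Set.mem_insert_iff, Set.mem_singleton_iff] at he'
        rcases he' with rfl | rfl
        · exact ha'
        · exact absurd ha'.symm (S.cross u hu e' h2)
    · -- the dominating edge was `v₁ x` with `v₁ ∈ D`
      rw [hv1]
      rw [he1] at he
      rw [hv1] at hv
      obtain ⟨w, hwm, hwv₁⟩ := other_mem hne he
      have hwx : w ≠ x := fun h => hv (h ▸ hwm)
      rcases S.mem hwx with h1 | h2
      · exfalso
        obtain ⟨c₂, hc₂⟩ := S.h2ne
        have hD : ({d, d'} : Set V) = {v₁, w} := pair_eq_of hne he hwm (Ne.symm hwv₁)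
        rw [hD] at hdom
        obtain ⟨e', he', ha'⟩ := hdom c₂ (by
          simp only [Set.mem_insert_iff, Set.mem_singleton_iff, not_or]
          exact ⟨(S.ne12 hv₁U.1 hc₂).symm, (S.ne12 h1 hc₂).symm⟩)
        simp only [Set.mem_insert_iff, Set.mem_singleton_iff] at he'
        rcases he' with rfl | rfl
        · exact S.cross e' hv₁U.1 c₂ hc₂ ha'
        · exact S.cross e' h1 c₂ hc₂ ha'
      · exact ⟨w, hwm, (adjDelx v₁ (hF₂ w h2) hwv₁).symm⟩
  · refine ⟨e, he, ?_⟩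
    rw [SimpleGraph.deleteEdges_adj]
    exact ⟨hae, by simpa using hbad⟩

/-- Transfer core for the case `x` misses a vertex in each component and its
neighbour `y ∈ C₁` is not universal: delete the edge `x y`. -/
lemma B3core (S : Struct G x C₁ C₂) {y : V} (hyC : y ∈ C₁) (hyU : ¬ UnivIn G C₁ y)
    (hnF₁ : ¬ ∀ u ∈ C₁, G.Adj x u) (hnF₂ : ¬ ∀ u ∈ C₂, G.Adj x u)
    {d d' : V} (hne : d ≠ d') (hdom : Dominating G {d, d'}) :
    Dominating (G.deleteEdges {s(x, y)}) {d, d'} := by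
  have hxD : x ∉ ({d, d'} : Set V) := by
    intro hx
    obtain ⟨w, hwm, hwx⟩ := other_mem hne hx
    have hD : ({d, d'} : Set V) = {x, w} := pair_eq_of hne hx hwm (Ne.symm hwx)
    rw [hD] at hdom
    rcases S.mem hwx with h1 | h2
    · apply hnF₂
      intro u hu
      obtain ⟨e', he', ha'⟩ := hdom u (by
        simp only [Set.mem_insert_iff, Set.mem_singleton_iff, not_or]
        exact ⟨S.ne_x2 hu, (S.ne12 h1 hu).symm⟩)
      simp only [Set.mem_insert_iff, Set.mem_singleton_iff] at he'
      rcases he' with rfl | rfl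
      · exact ha'
      · exact absurd ha' (S.cross e' h1 u hu)
    · apply hnF₁
      intro u hu
      obtain ⟨e', he', ha'⟩ := hdom u (by
        simp only [Set.mem_insert_iff, Set.mem_singleton_iff, not_or]
        exact ⟨S.ne_x1 hu, S.ne12 hu h2⟩)
      simp only [Set.mem_insert_iff, Set.mem_singleton_iff] at he'
      rcases he' with rfl | rfl
      · exact ha'
      · exact absurd ha'.symm (S.cross u hu e' h2)
  have hyD : y ∉ ({d, d'} : Set V) := by
    intro hy
    obtain ⟨w, hwm, hwy⟩ := other_mem hne hy
    have hwx : w ≠ x := fun h => hxD (h ▸ hwm)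
    have hD : ({d, d'} : Set V) = {y, w} := pair_eq_of hne hy hwm (Ne.symm hwy)
    rw [hD] at hdom
    rcases S.mem hwx with h1 | h2
    · obtain ⟨c₂, hc₂⟩ := S.h2ne
      obtain ⟨e', he', ha'⟩ := hdom c₂ (by
        simp only [Set.mem_insert_iff, Set.mem_singleton_iff, not_or]
        exact ⟨(S.ne12 hyC hc₂).symm, (S.ne12 h1 hc₂).symm⟩)
      simp only [Set.mem_insert_iff, Set.mem_singleton_iff] at he'
      rcases he' with rfl | rfl
      · exact S.cross e' hyC c₂ hc₂ ha'
      · exact S.cross e' h1 c₂ hc₂ ha'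
    · apply hyU
      refine ⟨hyC, fun u hu hune => ?_⟩
      obtain ⟨e', he', ha'⟩ := hdom u (by
        simp only [Set.mem_insert_iff, Set.mem_singleton_iff, not_or]
        exact ⟨hune, S.ne12 hu h2⟩)
      simp only [Set.mem_insert_iff, Set.mem_singleton_iff] at he'
      rcases he' with rfl | rfl
      · exact ha'
      · exact absurd ha'.symm (S.cross u hu e' h2)
  intro v hv
  obtain ⟨e, he, hae⟩ := hdom v hv
  refine ⟨e, he, ?_⟩
  rw [SimpleGraph.deleteEdges_adj]
  refine ⟨hae, ?_⟩
  simp only [Set.mem_singleton_iff, Sym2.eq_iff]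
  rintro (⟨rfl, rfl⟩ | ⟨rfl, rfl⟩)
  · exact hxD he
  · exact hyD he

/-- Winning strategy when `C₁` has two universal neighbours of `x`. -/
lemma stratA (S : Struct G x C₁ C₂) {v₁ y b₁ b₂ t : V}
    (hv₁U : UnivIn G C₁ v₁) (hv₁x : G.Adj x v₁)
    (hyU : UnivIn G C₁ y) (hyx : G.Adj x y) (hyv : y ≠ v₁)
    (hb₁ : UnivIn G C₂ b₁) (hb₂ : UnivIn G C₂ b₂) (hbne : b₁ ≠ b₂)
    (ht : t ∈ C₂) : WinsWithin2 (G.deleteEdges {s(x, t)}) := by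
  have hxv₁H : (G.deleteEdges {s(x, t)}).Adj x v₁ := adjDelx t hv₁x (S.ne12 hv₁U.1 ht)
  have hxyH : (G.deleteEdges {s(x, t)}).Adj x y := adjDelx t hyx (S.ne12 hyU.1 ht)
  intro s₁
  by_cases h1 : s₁ = v₁
  · subst h1
    refine ⟨y, hyv, Or.inr fun s₂ _ => ?_⟩
    by_cases h2 : b₁ = s₂
    · refine ⟨b₂, ?_, domPair S t hyU hb₂ (Or.inl hxyH)⟩
      simp only [Set.mem_insert_iff, Set.mem_singleton_iff, not_or]
      exact ⟨(S.ne12 hv₁U.1 hb₂.1).symm, (S.ne12 hyU.1 hb₂.1).symm, h2 ▸ hbne.symm⟩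
    · refine ⟨b₁, ?_, domPair S t hyU hb₁ (Or.inl hxyH)⟩
      simp only [Set.mem_insert_iff, Set.mem_singleton_iff, not_or]
      exact ⟨(S.ne12 hv₁U.1 hb₁.1).symm, (S.ne12 hyU.1 hb₁.1).symm, h2⟩
  · by_cases h2 : s₁ = b₁
    · subst h2
      refine ⟨b₂, hbne.symm, Or.inr fun s₂ _ => ?_⟩
      by_cases h3 : v₁ = s₂
      · refine ⟨y, ?_, Set.pair_comm y b₂ ▸ domPair S t hyU hb₂ (Or.inl hxyH)⟩
        simp only [Set.mem_insert_iff, Set.mem_singleton_iff, not_or]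
        exact ⟨S.ne12 hyU.1 hb₁.1, S.ne12 hyU.1 hb₂.1, h3 ▸ hyv⟩
      · refine ⟨v₁, ?_, Set.pair_comm v₁ b₂ ▸ domPair S t hv₁U hb₂ (Or.inl hxv₁H)⟩
        simp only [Set.mem_insert_iff, Set.mem_singleton_iff, not_or]
        exact ⟨S.ne12 hv₁U.1 hb₁.1, S.ne12 hv₁U.1 hb₂.1, h3⟩
    · by_cases h3 : s₁ = b₂
      · subst h3
        refine ⟨b₁, hbne, Or.inr fun s₂ _ => ?_⟩
        by_cases h4 : v₁ = s₂
        · refine ⟨y, ?_, Set.pair_comm y b₁ ▸ domPair S t hyU hb₁ (Or.inl hxyH)⟩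
          simp only [Set.mem_insert_iff, Set.mem_singleton_iff, not_or]
          exact ⟨S.ne12 hyU.1 hb₂.1, S.ne12 hyU.1 hb₁.1, h4 ▸ hyv⟩
        · refine ⟨v₁, ?_, Set.pair_comm v₁ b₁ ▸ domPair S t hv₁U hb₁ (Or.inl hxv₁H)⟩
          simp only [Set.mem_insert_iff, Set.mem_singleton_iff, not_or]
          exact ⟨S.ne12 hv₁U.1 hb₂.1, S.ne12 hv₁U.1 hb₁.1, h4⟩
      · refine ⟨v₁, fun h => h1 h.symm, Or.inr fun s₂ _ => ?_⟩
        by_cases h4 : b₁ = s₂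
        · refine ⟨b₂, ?_, domPair S t hv₁U hb₂ (Or.inl hxv₁H)⟩
          simp only [Set.mem_insert_iff, Set.mem_singleton_iff, not_or]
          exact ⟨fun h => h3 h.symm, (S.ne12 hv₁U.1 hb₂.1).symm, h4 ▸ hbne.symm⟩
        · refine ⟨b₁, ?_, domPair S t hv₁U hb₁ (Or.inl hxv₁H)⟩
          simp only [Set.mem_insert_iff, Set.mem_singleton_iff, not_or]
          exact ⟨fun h => h2 h.symm, (S.ne12 hv₁U.1 hb₁.1).symm, h4⟩

/-- Winning strategy when `x` sees all of `C₁`. -/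
lemma stratB1 (S : Struct G x C₁ C₂) {v₁ b₁ b₂ t : V}
    (hF₁ : ∀ u ∈ C₁, G.Adj x u) (hv₁U : UnivIn G C₁ v₁) (hv₁x : G.Adj x v₁)
    (hb₁ : UnivIn G C₂ b₁) (hb₂ : UnivIn G C₂ b₂) (hbne : b₁ ≠ b₂)
    (ht : t ∈ C₂) : WinsWithin2 (G.deleteEdges {s(x, t)}) := by
  have hxv₁H : (G.deleteEdges {s(x, t)}).Adj x v₁ := adjDelx t hv₁x (S.ne12 hv₁U.1 ht)
  intro s₁
  by_cases h1 : s₁ = x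
  · subst h1
    refine ⟨v₁, S.ne_x1 hv₁U.1, Or.inr fun s₂ _ => ?_⟩
    by_cases h2 : b₁ = s₂
    · refine ⟨b₂, ?_, domPair S t hv₁U hb₂ (Or.inl hxv₁H)⟩
      simp only [Set.mem_insert_iff, Set.mem_singleton_iff, not_or]
      exact ⟨S.ne_x2 hb₂.1, (S.ne12 hv₁U.1 hb₂.1).symm, h2 ▸ hbne.symm⟩
    · refine ⟨b₁, ?_, domPair S t hv₁U hb₁ (Or.inl hxv₁H)⟩
      simp only [Set.mem_insert_iff, Set.mem_singleton_iff, not_or]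
      exact ⟨S.ne_x2 hb₁.1, (S.ne12 hv₁U.1 hb₁.1).symm, h2⟩
  · by_cases h2 : s₁ = v₁
    · subst h2
      refine ⟨x, (S.ne_x1 hv₁U.1).symm, Or.inr fun s₂ _ => ?_⟩
      by_cases h3 : b₁ = s₂
      · refine ⟨b₂, ?_, domXb S hF₁ hb₂ ht⟩
        simp only [Set.mem_insert_iff, Set.mem_singleton_iff, not_or]
        exact ⟨(S.ne12 hv₁U.1 hb₂.1).symm, S.ne_x2 hb₂.1, h3 ▸ hbne.symm⟩
      · refine ⟨b₁, ?_, domXb S hF₁ hb₁ ht⟩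
        simp only [Set.mem_insert_iff, Set.mem_singleton_iff, not_or]
        exact ⟨(S.ne12 hv₁U.1 hb₁.1).symm, S.ne_x2 hb₁.1, h3⟩
    · by_cases hb : b₁ = s₁
      · refine ⟨b₂, hb ▸ hbne.symm, Or.inr fun s₂ _ => ?_⟩
        by_cases hv : v₁ = s₂
        · refine ⟨x, ?_, Set.pair_comm x b₂ ▸ domXb S hF₁ hb₂ ht⟩
          simp only [Set.mem_insert_iff, Set.mem_singleton_iff, not_or]
          exact ⟨fun h => h1 h.symm, (S.ne_x2 hb₂.1).symm, hv ▸ (S.ne_x1 hv₁U.1).symm⟩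
        · refine ⟨v₁, ?_, Set.pair_comm v₁ b₂ ▸ domPair S t hv₁U hb₂ (Or.inl hxv₁H)⟩
          simp only [Set.mem_insert_iff, Set.mem_singleton_iff, not_or]
          exact ⟨fun h => h2 h.symm, S.ne12 hv₁U.1 hb₂.1, hv⟩
      · refine ⟨b₁, hb, Or.inr fun s₂ _ => ?_⟩
        by_cases hv : v₁ = s₂
        · refine ⟨x, ?_, Set.pair_comm x b₁ ▸ domXb S hF₁ hb₁ ht⟩
          simp only [Set.mem_insert_iff, Set.mem_singleton_iff, not_or]
          exact ⟨fun h => h1 h.symm, (S.ne_x2 hb₁.1).symm, hv ▸ (S.ne_x1 hv₁U.1).symm⟩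
        · refine ⟨v₁, ?_, Set.pair_comm v₁ b₁ ▸ domPair S t hv₁U hb₁ (Or.inl hxv₁H)⟩
          simp only [Set.mem_insert_iff, Set.mem_singleton_iff, not_or]
          exact ⟨fun h => h2 h.symm, S.ne12 hv₁U.1 hb₁.1, hv⟩

/-- A walk from `C₂` to `x` produces a neighbour of `x` inside `C₂`. -/
lemma walk_exit (S : Struct G x C₁ C₂) :
    ∀ (u w : V) (p : G.Walk u w), w = x → u ∈ C₂ → ∃ z ∈ C₂, G.Adj x z := by
  intro u w p
  induction p with
  | nil => intro h hu; exact absurd (h ▸ hu) S.xn2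
  | @cons a b c hab p ih =>
    intro hw hu
    by_cases hbx : b = x
    · exact ⟨a, hu, (hbx ▸ hab).symm⟩
    · rcases S.mem hbx with h1 | h2
      · exact absurd hab.symm (S.cross b h1 a hu)
      · exact ih hw h2

/-- A walk from `v₁` to `x` avoiding the edge `v₁ x` produces another neighbour
of `x` inside `C₁`. -/
lemma walk_y (S : Struct G x C₁ C₂) (v₁ : V) :
    ∀ (u w : V) (p : (G.deleteEdges {s(v₁, x)}).Walk u w), w = x → u ∈ C₁ →
      ∃ z ∈ C₁, z ≠ v₁ ∧ G.Adj x z := by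
  intro u w p
  induction p with
  | nil => intro h hu; exact absurd (h ▸ hu) S.xn1
  | @cons a b c hab p ih =>
    intro hw hu
    rw [SimpleGraph.deleteEdges_adj] at hab
    obtain ⟨habG, hnab⟩ := hab
    by_cases hbx : b = x
    · subst hbx
      refine ⟨a, hu, ?_, habG.symm⟩
      intro hav
      exact hnab (by simp [hav])
    · rcases S.mem hbx with h1 | h2
      · exact ih hw h1
      · exact absurd habG (S.cross a hu b h2)

end Main


end Stmt11Aux

theorem stmt11 {V : Type*} [Fintype V] (G : SimpleGraph V) (hconn : G.Connected)
    (x : V) (C₁ C₂ : Set V) (hcomp : IsTwoComponents G x C₁ C₂)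
    (v₁ : V) (hv₁ : UnivIn G C₁ v₁)
    (hle : {v | UnivIn G C₁ v}.ncard ≤ {v | UnivIn G C₂ v}.ncard)
    (hadj : G.Adj v₁ x) (hbridge : ¬ G.IsBridge s(v₁, x)) :
    ¬ Critical2 G := by
  obtain ⟨h1ne, h2ne, hdisj, hunion, -, -, hcross⟩ := hcomp
  have S : Stmt11Aux.Struct G x C₁ C₂ := ⟨h1ne, h2ne, hdisj, hunion, hcross⟩
  intro hcrit
  obtain ⟨⟨hW2, -⟩, hcr⟩ := hcrit
  -- `x` has a neighbour in `C₂`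
  obtain ⟨c₂0, hc₂0⟩ := h2ne
  obtain ⟨p⟩ := hconn.preconnected c₂0 x
  obtain ⟨z₂, hz₂C, hxz₂⟩ := Stmt11Aux.walk_exit S c₂0 x p rfl hc₂0
  -- the non-bridge hypothesis gives a second neighbour of `x` in `C₁`
  have hreach : (G.deleteEdges {s(v₁, x)}).Reachable v₁ x := by
    rw [SimpleGraph.isBridge_iff] at hbridge
    by_contra hr
    exact hbridge hr
  obtain ⟨q⟩ := hreach
  obtain ⟨y, hyC, hyv, hxy⟩ := Stmt11Aux.walk_y S v₁ v₁ x q rfl hv₁.1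
  -- `C₂` contains two distinct universal vertices
  have hU2 : ∃ b₁ b₂ : V, UnivIn G C₂ b₁ ∧ UnivIn G C₂ b₂ ∧ b₁ ≠ b₂ := by
    obtain ⟨d₁, hd₁x, hbr⟩ := hW2 x
    rcases hbr with hs | h
    · exact absurd hs (Stmt11Aux.noSingleton' S hd₁x)
    · rcases S.mem hd₁x with h1 | h2
      · obtain ⟨d₂, hm, hdom⟩ := h c₂0 (by
          simp only [Set.mem_insert_iff, Set.mem_singleton_iff, not_or]
          exact ⟨S.ne_x2 hc₂0, (S.ne12 h1 hc₂0).symm⟩)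
        simp only [Set.mem_insert_iff, Set.mem_singleton_iff, not_or] at hm
        have shp := Stmt11Aux.shape S hdom (Ne.symm hd₁x) (Ne.symm hm.1) h1
        obtain ⟨d₂', hm', hdom'⟩ := h d₂ (by
          simp only [Set.mem_insert_iff, Set.mem_singleton_iff, not_or]
          exact ⟨hm.1, hm.2.1⟩)
        simp only [Set.mem_insert_iff, Set.mem_singleton_iff, not_or] at hm'
        have shp' := Stmt11Aux.shape S hdom' (Ne.symm hd₁x) (Ne.symm hm'.1) h1
        exact ⟨d₂, d₂', shp.2.2, shp'.2.2, fun hc => hm'.2.2 hc.symm⟩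
      · -- `d₁ ∈ C₂` : first get two distinct universal vertices of `C₁`
        have hgrab : ∀ s₂ : V, s₂ ∈ C₁ → ∃ d₂, d₂ ∈ C₁ ∧ d₂ ≠ s₂ ∧ UnivIn G C₁ d₂ := by
          intro s₂ hs₂C
          obtain ⟨d₂, hm, hdom⟩ := h s₂ (by
            simp only [Set.mem_insert_iff, Set.mem_singleton_iff, not_or]
            exact ⟨S.ne_x1 hs₂C, S.ne12 hs₂C h2⟩)
          simp only [Set.mem_insert_iff, Set.mem_singleton_iff, not_or] at hm
          have hd₂C : d₂ ∈ C₁ := by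
            rcases S.mem hm.1 with hh1 | hh2
            · exact hh1
            · exfalso
              obtain ⟨e, he, ha⟩ := hdom v₁ (by
                simp only [Set.mem_insert_iff, Set.mem_singleton_iff, not_or]
                exact ⟨S.ne12 hv₁.1 h2, S.ne12 hv₁.1 hh2⟩)
              simp only [Set.mem_insert_iff, Set.mem_singleton_iff] at he
              rcases he with rfl | rfl
              · exact absurd ha.symm (S.cross v₁ hv₁.1 e h2)
              · exact absurd ha.symm (S.cross v₁ hv₁.1 e hh2)
          have hdom' : Dominating G {d₂, d₁} := Set.pair_comm d₁ d₂ ▸ hdom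
          have shp := Stmt11Aux.shape S hdom' (Ne.symm hm.1) (Ne.symm hd₁x) hd₂C
          exact ⟨d₂, hd₂C, hm.2.2, shp.1⟩
        obtain ⟨a₁, ha₁C, -, ha₁U⟩ := hgrab v₁ hv₁.1
        obtain ⟨a₂, -, ha₂ne, ha₂U⟩ := hgrab a₁ ha₁C
        have hlt : 1 < {v | UnivIn G C₁ v}.ncard :=
          (Set.one_lt_ncard_iff (Set.toFinite _)).2 ⟨a₂, a₁, ha₂U, ha₁U, ha₂ne⟩
        obtain ⟨b₁, b₂, hb₁, hb₂, hbne⟩ :=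
          (Set.one_lt_ncard_iff (Set.toFinite _)).1 (lt_of_lt_of_le hlt hle)
        exact ⟨b₁, b₂, hb₁, hb₂, hbne⟩
  obtain ⟨b₁, b₂, hb₁, hb₂, hbne⟩ := hU2
  by_cases hyUc : UnivIn G C₁ y
  · exact hcr x z₂ hxz₂
      (Stmt11Aux.stratA S hv₁ hadj.symm hyUc hxy hyv hb₁ hb₂ hbne hz₂C)
  · by_cases hF₁ : ∀ u ∈ C₁, G.Adj x u
    · exact hcr x z₂ hxz₂
        (Stmt11Aux.stratB1 S hF₁ hv₁ hadj.symm hb₁ hb₂ hbne hz₂C)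
    · by_cases hF₂ : ∀ u ∈ C₂, G.Adj x u
      · exact hcr x v₁ hadj.symm
          (Stmt11Aux.transferW2
            (fun d d' hne hdom => Stmt11Aux.B2core S hv₁ hF₂ hF₁ hne hdom)
            (Stmt11Aux.noSingleton S hF₁) hW2)
      · exact hcr x y hxy
          (Stmt11Aux.transferW2
            (fun d d' hne hdom => Stmt11Aux.B3core S hyC hyUc hF₁ hF₂ hne hdom)
            (Stmt11Aux.noSingleton S hF₁) hW2)
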